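/- Adequacy of the anti-sequent calculus R_P for the three-valued logic P: a P-anti-sequent Γ₁ ∤ Γ₂ ∤ Γ₃ is provable in R_P if and only if it is refutable. -/
import Mathlib


/-- Truth values of the three-valued logic P: f < b < t. -/
inductive V3 : Type
  | f | b | t
deriving DecidableEq, Repr

namespace V3

/-- Negation: t, b, f ↦ f, b, t. -/
def negv : V3 → V3
  | .f => .t
  | .b => .b
  | .t => .f

/-- Conjunction: minimum with respect to f < b < t. -/
def conjv : V3 → V3 → V3
  | .f, _ => .f
  | _, .f => .f
  | .b, _ => .b
  | _, .b => .b
  | .t, .t => .t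

/-- Implication: `x ⊃ y` is `y` if `x` is designated (b or t), and `t` otherwise. -/
def impv : V3 → V3 → V3
  | .f, _ => .t
  | _, y => y

end V3

/-- Formulas of the three-valued logic P, with atoms indexed by ℕ, the constant
F, negation, conjunction, and implication. -/
inductive PForm : Type
  | atom : ℕ → PForm
  | fls : PForm
  | neg : PForm → PForm
  | conj : PForm → PForm → PForm
  | imp : PForm → PForm → PForm
deriving DecidableEq

namespace PForm

/-- The valuation of P extending an interpretation `I : ℕ → V3`. -/
def val (I : ℕ → V3) : PForm → V3
  | atom p => I p
  | fls => .f
  | neg φ => (φ.val I).negv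
  | conj φ ψ => (φ.val I).conjv (ψ.val I)
  | imp φ ψ => (φ.val I).impv (ψ.val I)

/-- `I` is a P-model of `φ`: `v_I(φ)` is designated, i.e. b or t. -/
def IsModel (I : ℕ → V3) (φ : PForm) : Prop := φ.val I = .b ∨ φ.val I = .t

/-- `I` is a P-model of the theory `Γ`. -/
def IsModelSet (I : ℕ → V3) (Γ : Set PForm) : Prop := ∀ φ ∈ Γ, IsModel I φ

end PForm

/-- A P-anti-sequent `Γ₁ ∤ Γ₂ ∤ Γ₃` is refuted by `I` if no formula of `Γ₁`
takes value f, no formula of `Γ₂` takes value b, and no formula of `Γ₃` takes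
value t under `I`. -/
def PAntiRefutedBy (I : ℕ → V3) (Γ₁ Γ₂ Γ₃ : Finset PForm) : Prop :=
  (∀ φ ∈ Γ₁, φ.val I ≠ .f) ∧ (∀ φ ∈ Γ₂, φ.val I ≠ .b) ∧ (∀ φ ∈ Γ₃, φ.val I ≠ .t)

/-- A P-anti-sequent is refutable if some interpretation refutes it. -/
def PAntiRefutable (Γ₁ Γ₂ Γ₃ : Finset PForm) : Prop := ∃ I, PAntiRefutedBy I Γ₁ Γ₂ Γ₃

/-- A formula that is an atom or the constant F. -/
def PForm.IsBasic : PForm → Prop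
  | .atom _ => True
  | .fls => True
  | _ => False

/-- The anti-sequent calculus `R_P` for the three-valued logic P (components in
the order f ∤ b ∤ t). -/
inductive RP : Finset PForm → Finset PForm → Finset PForm → Prop
  | ax (Γ Δ Ω : Finset PForm) :
      (∀ φ ∈ Γ ∪ Δ ∪ Ω, φ.IsBasic) → Γ ∩ Δ ∩ Ω = ∅ → .fls ∉ Γ →
      RP Γ Δ Ω
  | negF {Γ Δ Ω : Finset PForm} {φ : PForm} :
      RP Γ Δ (insert φ Ω) → RP (insert (.neg φ) Γ) Δ Ω
  | negB {Γ Δ Ω : Finset PForm} {φ : PForm} :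
      RP Γ (insert φ Δ) Ω → RP Γ (insert (.neg φ) Δ) Ω
  | negT {Γ Δ Ω : Finset PForm} {φ : PForm} :
      RP (insert φ Γ) Δ Ω → RP Γ Δ (insert (.neg φ) Ω)
  | conjF {Γ Δ Ω : Finset PForm} {φ ψ : PForm} :
      RP (insert φ (insert ψ Γ)) Δ Ω → RP (insert (.conj φ ψ) Γ) Δ Ω
  | conjB1 {Γ Δ Ω : Finset PForm} {φ ψ : PForm} :
      RP Γ (insert φ (insert ψ Δ)) Ω → RP Γ (insert (.conj φ ψ) Δ) Ω
  | conjB2 {Γ Δ Ω : Finset PForm} {φ ψ : PForm} :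
      RP Γ (insert φ Δ) (insert φ Ω) → RP Γ (insert (.conj φ ψ) Δ) Ω
  | conjB3 {Γ Δ Ω : Finset PForm} {φ ψ : PForm} :
      RP Γ (insert ψ Δ) (insert ψ Ω) → RP Γ (insert (.conj φ ψ) Δ) Ω
  | conjT1 {Γ Δ Ω : Finset PForm} {φ ψ : PForm} :
      RP Γ Δ (insert φ Ω) → RP Γ Δ (insert (.conj φ ψ) Ω)
  | conjT2 {Γ Δ Ω : Finset PForm} {φ ψ : PForm} :
      RP Γ Δ (insert ψ Ω) → RP Γ Δ (insert (.conj φ ψ) Ω)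
  | impF1 {Γ Δ Ω : Finset PForm} {φ ψ : PForm} :
      RP Γ (insert φ Δ) (insert φ Ω) → RP (insert (.imp φ ψ) Γ) Δ Ω
  | impF2 {Γ Δ Ω : Finset PForm} {φ ψ : PForm} :
      RP (insert ψ Γ) Δ Ω → RP (insert (.imp φ ψ) Γ) Δ Ω
  | impB1 {Γ Δ Ω : Finset PForm} {φ ψ : PForm} :
      RP Γ (insert φ Δ) (insert φ Ω) → RP Γ (insert (.imp φ ψ) Δ) Ω
  | impB2 {Γ Δ Ω : Finset PForm} {φ ψ : PForm} :
      RP Γ (insert ψ Δ) Ω → RP Γ (insert (.imp φ ψ) Δ) Ω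
  | impT {Γ Δ Ω : Finset PForm} {φ ψ : PForm} :
      RP (insert φ Γ) Δ (insert ψ Ω) → RP Γ Δ (insert (.imp φ ψ) Ω)


namespace PForm

/-- Size of a formula. -/
def sz : PForm → ℕ
  | atom _ => 1
  | fls => 1
  | neg φ => φ.sz + 1
  | conj φ ψ => φ.sz + ψ.sz + 1
  | imp φ ψ => φ.sz + ψ.sz + 1

lemma one_le_sz (φ : PForm) : 1 ≤ φ.sz := by
  cases φ <;> simp [sz]

/-- Weight of a formula. -/
def wt (φ : PForm) : ℕ := 3 ^ φ.sz

lemma three_le_pow (n : ℕ) (h : 1 ≤ n) : 3 ≤ 3 ^ n :=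
  le_trans (by norm_num) (Nat.pow_le_pow_right (by norm_num) h)

lemma wt_neg (φ : PForm) : φ.wt + 1 ≤ (neg φ).wt := by
  have h1 : 1 ≤ 3 ^ φ.sz := Nat.one_le_pow _ _ (by norm_num)
  simp only [wt, sz, pow_succ]
  omega

lemma wt_bin (φ ψ : PForm) :
    2 * φ.wt + 1 ≤ 3 ^ (φ.sz + ψ.sz + 1) ∧
    2 * ψ.wt + 1 ≤ 3 ^ (φ.sz + ψ.sz + 1) ∧
    φ.wt + ψ.wt + 1 ≤ 3 ^ (φ.sz + ψ.sz + 1) := by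
  have e : 3 ^ (φ.sz + ψ.sz + 1) = 3 ^ φ.sz * 3 ^ ψ.sz * 3 := by
    rw [pow_add, pow_add]; ring
  have ha : 3 ≤ 3 ^ φ.sz := three_le_pow _ (one_le_sz φ)
  have hb : 3 ≤ 3 ^ ψ.sz := three_le_pow _ (one_le_sz ψ)
  refine ⟨?_, ?_, ?_⟩ <;> rw [e] <;> simp only [wt] <;> nlinarith

lemma wt_conj_l (φ ψ : PForm) : 2 * φ.wt + 1 ≤ (conj φ ψ).wt := (wt_bin φ ψ).1
lemma wt_conj_r (φ ψ : PForm) : 2 * ψ.wt + 1 ≤ (conj φ ψ).wt := (wt_bin φ ψ).2.1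
lemma wt_conj_b (φ ψ : PForm) : φ.wt + ψ.wt + 1 ≤ (conj φ ψ).wt := (wt_bin φ ψ).2.2
lemma wt_imp_l (φ ψ : PForm) : 2 * φ.wt + 1 ≤ (imp φ ψ).wt := (wt_bin φ ψ).1
lemma wt_imp_r (φ ψ : PForm) : 2 * ψ.wt + 1 ≤ (imp φ ψ).wt := (wt_bin φ ψ).2.1
lemma wt_imp_b (φ ψ : PForm) : φ.wt + ψ.wt + 1 ≤ (imp φ ψ).wt := (wt_bin φ ψ).2.2

end PForm

open PForm in
lemma sw_insert_le (φ : PForm) (S : Finset PForm) :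
    (insert φ S).sum PForm.wt ≤ φ.wt + S.sum PForm.wt := by
  classical
  by_cases h : φ ∈ S
  · rw [Finset.insert_eq_self.2 h]; exact Nat.le_add_left _ _
  · rw [Finset.sum_insert h]

open PForm in
lemma sw_erase {C : PForm} {S : Finset PForm} (h : C ∈ S) :
    S.sum PForm.wt = C.wt + (S.erase C).sum PForm.wt :=
  (Finset.add_sum_erase _ _ h).symm

/-- Soundness of `R_P`. -/
lemma RP_sound {Γ Δ Ω : Finset PForm} (h : RP Γ Δ Ω) : PAntiRefutable Γ Δ Ω := by
  induction h with
  | ax Γ Δ Ω hb hdisj hF =>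
      classical
      refine ⟨fun p => if PForm.atom p ∈ Γ then (if PForm.atom p ∈ Δ then .t else .b)
        else .f, ?_, ?_, ?_⟩
      · intro χ hχ
        have hbas := hb χ (Finset.mem_union_left _ (Finset.mem_union_left _ hχ))
        cases χ with
        | atom p => simp only [PForm.val, if_pos hχ]; split <;> simp
        | fls => exact absurd hχ hF
        | neg _ => exact absurd hbas (by simp [PForm.IsBasic])
        | conj _ _ => exact absurd hbas (by simp [PForm.IsBasic])
        | imp _ _ => exact absurd hbas (by simp [PForm.IsBasic])
      · intro χ hχ
        have hbas := hb χ (Finset.mem_union_left _ (Finset.mem_union_right _ hχ))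
        cases χ with
        | atom p =>
            simp only [PForm.val]
            by_cases hG : PForm.atom p ∈ Γ
            · simp [hG, hχ]
            · simp [hG]
        | fls => simp [PForm.val]
        | neg _ => exact absurd hbas (by simp [PForm.IsBasic])
        | conj _ _ => exact absurd hbas (by simp [PForm.IsBasic])
        | imp _ _ => exact absurd hbas (by simp [PForm.IsBasic])
      · intro χ hχ
        have hbas := hb χ (Finset.mem_union_right _ hχ)
        cases χ with
        | atom p =>
            simp only [PForm.val]
            by_cases hG : PForm.atom p ∈ Γ
            · by_cases hD : PForm.atom p ∈ Δ
              · exfalso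
                have : PForm.atom p ∈ Γ ∩ Δ ∩ Ω := by
                  simp [Finset.mem_inter, hG, hD, hχ]
                rw [hdisj] at this
                exact absurd this (Finset.notMem_empty _)
              · simp [hG, hD]
            · simp [hG]
        | fls => simp [PForm.val]
        | neg _ => exact absurd hbas (by simp [PForm.IsBasic])
        | conj _ _ => exact absurd hbas (by simp [PForm.IsBasic])
        | imp _ _ => exact absurd hbas (by simp [PForm.IsBasic])
  | @negF Γ Δ Ω φ _ ih =>
      obtain ⟨I, h1, h2, h3⟩ := ih
      refine ⟨I, ?_, h2, fun χ hχ => h3 χ (Finset.mem_insert_of_mem hχ)⟩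
      intro χ hχ
      rcases Finset.mem_insert.1 hχ with rfl | hχ
      · have := h3 φ (Finset.mem_insert_self _ _)
        cases hv : φ.val I <;> simp_all [PForm.val, V3.negv]
      · exact h1 χ hχ
  | @negB Γ Δ Ω φ _ ih =>
      obtain ⟨I, h1, h2, h3⟩ := ih
      refine ⟨I, h1, ?_, h3⟩
      intro χ hχ
      rcases Finset.mem_insert.1 hχ with rfl | hχ
      · have := h2 φ (Finset.mem_insert_self _ _)
        cases hv : φ.val I <;> simp_all [PForm.val, V3.negv]
      · exact h2 χ (Finset.mem_insert_of_mem hχ)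
  | @negT Γ Δ Ω φ _ ih =>
      obtain ⟨I, h1, h2, h3⟩ := ih
      refine ⟨I, fun χ hχ => h1 χ (Finset.mem_insert_of_mem hχ), h2, ?_⟩
      intro χ hχ
      rcases Finset.mem_insert.1 hχ with rfl | hχ
      · have := h1 φ (Finset.mem_insert_self _ _)
        cases hv : φ.val I <;> simp_all [PForm.val, V3.negv]
      · exact h3 χ hχ
  | @conjF Γ Δ Ω φ ψ _ ih =>
      obtain ⟨I, h1, h2, h3⟩ := ih
      refine ⟨I, ?_, h2, h3⟩
      intro χ hχ
      rcases Finset.mem_insert.1 hχ with rfl | hχ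
      · have hφ := h1 φ (Finset.mem_insert_self _ _)
        have hψ := h1 ψ (Finset.mem_insert_of_mem (Finset.mem_insert_self _ _))
        cases hu : φ.val I <;> cases hv : ψ.val I <;>
          simp_all [PForm.val, V3.conjv]
      · exact h1 χ (Finset.mem_insert_of_mem (Finset.mem_insert_of_mem hχ))
  | @conjB1 Γ Δ Ω φ ψ _ ih =>
      obtain ⟨I, h1, h2, h3⟩ := ih
      refine ⟨I, h1, ?_, h3⟩
      intro χ hχ
      rcases Finset.mem_insert.1 hχ with rfl | hχ
      · have hφ := h2 φ (Finset.mem_insert_self _ _)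
        have hψ := h2 ψ (Finset.mem_insert_of_mem (Finset.mem_insert_self _ _))
        cases hu : φ.val I <;> cases hv : ψ.val I <;>
          simp_all [PForm.val, V3.conjv]
      · exact h2 χ (Finset.mem_insert_of_mem (Finset.mem_insert_of_mem hχ))
  | @conjB2 Γ Δ Ω φ ψ _ ih =>
      obtain ⟨I, h1, h2, h3⟩ := ih
      refine ⟨I, h1, ?_, fun χ hχ => h3 χ (Finset.mem_insert_of_mem hχ)⟩
      intro χ hχ
      rcases Finset.mem_insert.1 hχ with rfl | hχ
      · have hφ1 := h2 φ (Finset.mem_insert_self _ _)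
        have hφ2 := h3 φ (Finset.mem_insert_self _ _)
        cases hu : φ.val I <;> cases hv : ψ.val I <;>
          simp_all [PForm.val, V3.conjv]
      · exact h2 χ (Finset.mem_insert_of_mem hχ)
  | @conjB3 Γ Δ Ω φ ψ _ ih =>
      obtain ⟨I, h1, h2, h3⟩ := ih
      refine ⟨I, h1, ?_, fun χ hχ => h3 χ (Finset.mem_insert_of_mem hχ)⟩
      intro χ hχ
      rcases Finset.mem_insert.1 hχ with rfl | hχ
      · have hψ1 := h2 ψ (Finset.mem_insert_self _ _)
        have hψ2 := h3 ψ (Finset.mem_insert_self _ _)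
        cases hu : φ.val I <;> cases hv : ψ.val I <;>
          simp_all [PForm.val, V3.conjv]
      · exact h2 χ (Finset.mem_insert_of_mem hχ)
  | @conjT1 Γ Δ Ω φ ψ _ ih =>
      obtain ⟨I, h1, h2, h3⟩ := ih
      refine ⟨I, h1, h2, ?_⟩
      intro χ hχ
      rcases Finset.mem_insert.1 hχ with rfl | hχ
      · have hφ := h3 φ (Finset.mem_insert_self _ _)
        cases hu : φ.val I <;> cases hv : ψ.val I <;>
          simp_all [PForm.val, V3.conjv]
      · exact h3 χ (Finset.mem_insert_of_mem hχ)
  | @conjT2 Γ Δ Ω φ ψ _ ih =>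
      obtain ⟨I, h1, h2, h3⟩ := ih
      refine ⟨I, h1, h2, ?_⟩
      intro χ hχ
      rcases Finset.mem_insert.1 hχ with rfl | hχ
      · have hψ := h3 ψ (Finset.mem_insert_self _ _)
        cases hu : φ.val I <;> cases hv : ψ.val I <;>
          simp_all [PForm.val, V3.conjv]
      · exact h3 χ (Finset.mem_insert_of_mem hχ)
  | @impF1 Γ Δ Ω φ ψ _ ih =>
      obtain ⟨I, h1, h2, h3⟩ := ih
      refine ⟨I, ?_, fun χ hχ => h2 χ (Finset.mem_insert_of_mem hχ),
        fun χ hχ => h3 χ (Finset.mem_insert_of_mem hχ)⟩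
      intro χ hχ
      rcases Finset.mem_insert.1 hχ with rfl | hχ
      · have hφ1 := h2 φ (Finset.mem_insert_self _ _)
        have hφ2 := h3 φ (Finset.mem_insert_self _ _)
        cases hu : φ.val I <;> cases hv : ψ.val I <;>
          simp_all [PForm.val, V3.impv]
      · exact h1 χ hχ
  | @impF2 Γ Δ Ω φ ψ _ ih =>
      obtain ⟨I, h1, h2, h3⟩ := ih
      refine ⟨I, ?_, h2, h3⟩
      intro χ hχ
      rcases Finset.mem_insert.1 hχ with rfl | hχ
      · have hψ := h1 ψ (Finset.mem_insert_self _ _)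
        cases hu : φ.val I <;> cases hv : ψ.val I <;>
          simp_all [PForm.val, V3.impv]
      · exact h1 χ (Finset.mem_insert_of_mem hχ)
  | @impB1 Γ Δ Ω φ ψ _ ih =>
      obtain ⟨I, h1, h2, h3⟩ := ih
      refine ⟨I, h1, ?_, fun χ hχ => h3 χ (Finset.mem_insert_of_mem hχ)⟩
      intro χ hχ
      rcases Finset.mem_insert.1 hχ with rfl | hχ
      · have hφ1 := h2 φ (Finset.mem_insert_self _ _)
        have hφ2 := h3 φ (Finset.mem_insert_self _ _)
        cases hu : φ.val I <;> cases hv : ψ.val I <;>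
          simp_all [PForm.val, V3.impv]
      · exact h2 χ (Finset.mem_insert_of_mem hχ)
  | @impB2 Γ Δ Ω φ ψ _ ih =>
      obtain ⟨I, h1, h2, h3⟩ := ih
      refine ⟨I, h1, ?_, h3⟩
      intro χ hχ
      rcases Finset.mem_insert.1 hχ with rfl | hχ
      · have hψ := h2 ψ (Finset.mem_insert_self _ _)
        cases hu : φ.val I <;> cases hv : ψ.val I <;>
          simp_all [PForm.val, V3.impv]
      · exact h2 χ (Finset.mem_insert_of_mem hχ)
  | @impT Γ Δ Ω φ ψ _ ih =>
      obtain ⟨I, h1, h2, h3⟩ := ih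
      refine ⟨I, fun χ hχ => h1 χ (Finset.mem_insert_of_mem hχ), h2, ?_⟩
      intro χ hχ
      rcases Finset.mem_insert.1 hχ with rfl | hχ
      · have hφ := h1 φ (Finset.mem_insert_self _ _)
        have hψ := h3 ψ (Finset.mem_insert_self _ _)
        cases hu : φ.val I <;> cases hv : ψ.val I <;>
          simp_all [PForm.val, V3.impv]
      · exact h3 χ (Finset.mem_insert_of_mem hχ)

/-- Completeness of `R_P`, by strong induction on total weight. -/
lemma RP_complete : ∀ n Γ Δ Ω,
    Γ.sum PForm.wt + Δ.sum PForm.wt + Ω.sum PForm.wt < n →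
    PAntiRefutable Γ Δ Ω → RP Γ Δ Ω := by
  intro n
  induction n with
  | zero => intro _ _ _ h; omega
  | succ n IH =>
    intro Γ Δ Ω hm href
    obtain ⟨I, h1, h2, h3⟩ := href
    classical
    by_cases hb : ∀ φ ∈ Γ ∪ Δ ∪ Ω, φ.IsBasic
    · refine RP.ax _ _ _ hb ?_ ?_
      · rw [Finset.eq_empty_iff_forall_notMem]
        intro χ hχ
        simp only [Finset.mem_inter] at hχ
        obtain ⟨⟨hG, hD⟩, hO⟩ := hχ
        rcases hv : χ.val I with _ | _ | _
        · exact h1 χ hG hv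
        · exact h2 χ hD hv
        · exact h3 χ hO hv
      · intro hF
        exact h1 _ hF rfl
    · push_neg at hb
      obtain ⟨θ, hθmem, hθ⟩ := hb
      rcases Finset.mem_union.1 hθmem with hGD | hO
      · rcases Finset.mem_union.1 hGD with hG | hD
        · -- θ ∈ Γ
          cases θ with
          | atom p => exact absurd trivial hθ
          | fls => exact absurd trivial hθ
          | neg φ =>
            have hφv : φ.val I ≠ .t := by
              have := h1 _ hG
              cases hv : φ.val I <;> simp_all [PForm.val, V3.negv]
            rw [← Finset.insert_erase hG]
            apply RP.negF
            apply IH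
            · have e1 := sw_erase hG
              have e2 := sw_insert_le φ Ω
              have e3 := PForm.wt_neg φ
              omega
            · exact ⟨I, fun χ hχ => h1 χ (Finset.mem_of_mem_erase hχ), h2,
                fun χ hχ => by
                  rcases Finset.mem_insert.1 hχ with rfl | hχ
                  · exact hφv
                  · exact h3 χ hχ⟩
          | conj φ ψ =>
            have hc : φ.val I ≠ .f ∧ ψ.val I ≠ .f := by
              have := h1 _ hG
              cases hu : φ.val I <;> cases hv : ψ.val I <;>
                simp_all [PForm.val, V3.conjv]
            rw [← Finset.insert_erase hG]
            apply RP.conjF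
            apply IH
            · have e1 := sw_erase hG
              have e2 := sw_insert_le ψ (Γ.erase (PForm.conj φ ψ))
              have e3 := sw_insert_le φ (insert ψ (Γ.erase (PForm.conj φ ψ)))
              have e4 := PForm.wt_conj_b φ ψ
              omega
            · refine ⟨I, fun χ hχ => ?_, h2, h3⟩
              rcases Finset.mem_insert.1 hχ with rfl | hχ
              · exact hc.1
              rcases Finset.mem_insert.1 hχ with rfl | hχ
              · exact hc.2
              · exact h1 χ (Finset.mem_of_mem_erase hχ)
          | imp φ ψ =>
            have hC := h1 _ hG
            rw [← Finset.insert_erase hG]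
            rcases hu : φ.val I with _ | _ | _
            · apply RP.impF1
              apply IH
              · have e1 := sw_erase hG
                have e2 := sw_insert_le φ Δ
                have e3 := sw_insert_le φ Ω
                have e4 := PForm.wt_imp_l φ ψ
                omega
              · refine ⟨I, fun χ hχ => h1 χ (Finset.mem_of_mem_erase hχ),
                  fun χ hχ => ?_, fun χ hχ => ?_⟩
                · rcases Finset.mem_insert.1 hχ with rfl | hχ
                  · simp [hu]
                  · exact h2 χ hχ
                · rcases Finset.mem_insert.1 hχ with rfl | hχ
                  · simp [hu]
                  · exact h3 χ hχ
            all_goals {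
              apply RP.impF2
              apply IH
              · have e1 := sw_erase hG
                have e2 := sw_insert_le ψ (Γ.erase (PForm.imp φ ψ))
                have e3 := PForm.wt_imp_r φ ψ
                omega
              · refine ⟨I, fun χ hχ => ?_, h2, h3⟩
                rcases Finset.mem_insert.1 hχ with rfl | hχ
                · simp_all [PForm.val, V3.impv]
                · exact h1 χ (Finset.mem_of_mem_erase hχ) }
        · -- θ ∈ Δ
          cases θ with
          | atom p => exact absurd trivial hθ
          | fls => exact absurd trivial hθ
          | neg φ =>
            have hφv : φ.val I ≠ .b := by
              have := h2 _ hD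
              cases hv : φ.val I <;> simp_all [PForm.val, V3.negv]
            rw [← Finset.insert_erase hD]
            apply RP.negB
            apply IH
            · have e1 := sw_erase hD
              have e2 := sw_insert_le φ (Δ.erase (PForm.neg φ))
              have e3 := PForm.wt_neg φ
              omega
            · exact ⟨I, h1, fun χ hχ => by
                rcases Finset.mem_insert.1 hχ with rfl | hχ
                · exact hφv
                · exact h2 χ (Finset.mem_of_mem_erase hχ), h3⟩
          | conj φ ψ =>
            have hC := h2 _ hD
            rw [← Finset.insert_erase hD]
            rcases hv : ψ.val I with _ | _ | _
            · -- ψ = f : conjB3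
              apply RP.conjB3
              apply IH
              · have e1 := sw_erase hD
                have e2 := sw_insert_le ψ (Δ.erase (PForm.conj φ ψ))
                have e3 := sw_insert_le ψ Ω
                have e4 := PForm.wt_conj_r φ ψ
                omega
              · refine ⟨I, h1, fun χ hχ => ?_, fun χ hχ => ?_⟩
                · rcases Finset.mem_insert.1 hχ with rfl | hχ
                  · simp [hv]
                  · exact h2 χ (Finset.mem_of_mem_erase hχ)
                · rcases Finset.mem_insert.1 hχ with rfl | hχ
                  · simp [hv]
                  · exact h3 χ hχ
            · -- ψ = b : φ must be f
              rcases hu : φ.val I with _ | _ | _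
              · apply RP.conjB2
                apply IH
                · have e1 := sw_erase hD
                  have e2 := sw_insert_le φ (Δ.erase (PForm.conj φ ψ))
                  have e3 := sw_insert_le φ Ω
                  have e4 := PForm.wt_conj_l φ ψ
                  omega
                · refine ⟨I, h1, fun χ hχ => ?_, fun χ hχ => ?_⟩
                  · rcases Finset.mem_insert.1 hχ with rfl | hχ
                    · simp [hu]
                    · exact h2 χ (Finset.mem_of_mem_erase hχ)
                  · rcases Finset.mem_insert.1 hχ with rfl | hχ
                    · simp [hu]
                    · exact h3 χ hχ
              · exact absurd (hC (by simp [PForm.val, V3.conjv, hu, hv])) not_false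
              · exact absurd (hC (by simp [PForm.val, V3.conjv, hu, hv])) not_false
            · -- ψ = t
              rcases hu : φ.val I with _ | _ | _
              · apply RP.conjB2
                apply IH
                · have e1 := sw_erase hD
                  have e2 := sw_insert_le φ (Δ.erase (PForm.conj φ ψ))
                  have e3 := sw_insert_le φ Ω
                  have e4 := PForm.wt_conj_l φ ψ
                  omega
                · refine ⟨I, h1, fun χ hχ => ?_, fun χ hχ => ?_⟩
                  · rcases Finset.mem_insert.1 hχ with rfl | hχ
                    · simp [hu]
                    · exact h2 χ (Finset.mem_of_mem_erase hχ)
                  · rcases Finset.mem_insert.1 hχ with rfl | hχ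
                    · simp [hu]
                    · exact h3 χ hχ
              · exact absurd (hC (by simp [PForm.val, V3.conjv, hu, hv])) not_false
              · -- both t : conjB1
                apply RP.conjB1
                apply IH
                · have e1 := sw_erase hD
                  have e2 := sw_insert_le ψ (Δ.erase (PForm.conj φ ψ))
                  have e3 := sw_insert_le φ (insert ψ (Δ.erase (PForm.conj φ ψ)))
                  have e4 := PForm.wt_conj_b φ ψ
                  omega
                · refine ⟨I, h1, fun χ hχ => ?_, h3⟩
                  rcases Finset.mem_insert.1 hχ with rfl | hχ
                  · simp [hu]
                  rcases Finset.mem_insert.1 hχ with rfl | hχ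
                  · simp [hv]
                  · exact h2 χ (Finset.mem_of_mem_erase hχ)
          | imp φ ψ =>
            have hC := h2 _ hD
            rw [← Finset.insert_erase hD]
            rcases hu : φ.val I with _ | _ | _
            · apply RP.impB1
              apply IH
              · have e1 := sw_erase hD
                have e2 := sw_insert_le φ (Δ.erase (PForm.imp φ ψ))
                have e3 := sw_insert_le φ Ω
                have e4 := PForm.wt_imp_l φ ψ
                omega
              · refine ⟨I, h1, fun χ hχ => ?_, fun χ hχ => ?_⟩
                · rcases Finset.mem_insert.1 hχ with rfl | hχ
                  · simp [hu]
                  · exact h2 χ (Finset.mem_of_mem_erase hχ)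
                · rcases Finset.mem_insert.1 hχ with rfl | hχ
                  · simp [hu]
                  · exact h3 χ hχ
            all_goals {
              apply RP.impB2
              apply IH
              · have e1 := sw_erase hD
                have e2 := sw_insert_le ψ (Δ.erase (PForm.imp φ ψ))
                have e3 := PForm.wt_imp_r φ ψ
                omega
              · refine ⟨I, h1, fun χ hχ => ?_, h3⟩
                rcases Finset.mem_insert.1 hχ with rfl | hχ
                · simp_all [PForm.val, V3.impv]
                · exact h2 χ (Finset.mem_of_mem_erase hχ) }
      · -- θ ∈ Ω
        cases θ with
        | atom p => exact absurd trivial hθ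
        | fls => exact absurd trivial hθ
        | neg φ =>
          have hφv : φ.val I ≠ .f := by
            have := h3 _ hO
            cases hv : φ.val I <;> simp_all [PForm.val, V3.negv]
          rw [← Finset.insert_erase hO]
          apply RP.negT
          apply IH
          · have e1 := sw_erase hO
            have e2 := sw_insert_le φ Γ
            have e3 := PForm.wt_neg φ
            omega
          · exact ⟨I, fun χ hχ => by
              rcases Finset.mem_insert.1 hχ with rfl | hχ
              · exact hφv
              · exact h1 χ hχ, h2,
              fun χ hχ => h3 χ (Finset.mem_of_mem_erase hχ)⟩
        | conj φ ψ =>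
          have hC := h3 _ hO
          rw [← Finset.insert_erase hO]
          rcases hu : φ.val I with _ | _ | _
          · apply RP.conjT1
            apply IH
            · have e1 := sw_erase hO
              have e2 := sw_insert_le φ (Ω.erase (PForm.conj φ ψ))
              have e3 := PForm.wt_conj_l φ ψ
              omega
            · refine ⟨I, h1, h2, fun χ hχ => ?_⟩
              rcases Finset.mem_insert.1 hχ with rfl | hχ
              · simp [hu]
              · exact h3 χ (Finset.mem_of_mem_erase hχ)
          · apply RP.conjT1
            apply IH
            · have e1 := sw_erase hO
              have e2 := sw_insert_le φ (Ω.erase (PForm.conj φ ψ))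
              have e3 := PForm.wt_conj_l φ ψ
              omega
            · refine ⟨I, h1, h2, fun χ hχ => ?_⟩
              rcases Finset.mem_insert.1 hχ with rfl | hχ
              · simp [hu]
              · exact h3 χ (Finset.mem_of_mem_erase hχ)
          · have hψv : ψ.val I ≠ .t := by
              intro hv; exact hC (by simp [PForm.val, V3.conjv, hu, hv])
            apply RP.conjT2
            apply IH
            · have e1 := sw_erase hO
              have e2 := sw_insert_le ψ (Ω.erase (PForm.conj φ ψ))
              have e3 := PForm.wt_conj_r φ ψ
              omega
            · refine ⟨I, h1, h2, fun χ hχ => ?_⟩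
              rcases Finset.mem_insert.1 hχ with rfl | hχ
              · exact hψv
              · exact h3 χ (Finset.mem_of_mem_erase hχ)
        | imp φ ψ =>
          have hC := h3 _ hO
          have hφv : φ.val I ≠ .f := by
            intro hv; exact hC (by simp [PForm.val, V3.impv, hv])
          have hψv : ψ.val I ≠ .t := by
            intro hv
            apply hC
            cases hu : φ.val I <;> simp_all [PForm.val, V3.impv]
          rw [← Finset.insert_erase hO]
          apply RP.impT
          apply IH
          · have e1 := sw_erase hO
            have e2 := sw_insert_le φ Γ
            have e3 := sw_insert_le ψ (Ω.erase (PForm.imp φ ψ))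
            have e4 := PForm.wt_imp_b φ ψ
            omega
          · refine ⟨I, fun χ hχ => ?_, h2, fun χ hχ => ?_⟩
            · rcases Finset.mem_insert.1 hχ with rfl | hχ
              · exact hφv
              · exact h1 χ hχ
            · rcases Finset.mem_insert.1 hχ with rfl | hχ
              · exact hψv
              · exact h3 χ (Finset.mem_of_mem_erase hχ)

/-- Adequacy of the anti-sequent calculus `R_P`: a P-anti-sequent
`Γ₁ ∤ Γ₂ ∤ Γ₃` is provable in `R_P` iff it is refutable. -/
theorem RP_adequate (Γ₁ Γ₂ Γ₃ : Finset PForm) :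
    RP Γ₁ Γ₂ Γ₃ ↔ PAntiRefutable Γ₁ Γ₂ Γ₃ := by
  constructor
  · exact RP_sound
  · intro h
    exact RP_complete (Γ₁.sum PForm.wt + Γ₂.sum PForm.wt + Γ₃.sum PForm.wt + 1)
      Γ₁ Γ₂ Γ₃ (by omega) h
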